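/- Let C ⊆ ℝᵐ be a closed convex set, f : C → ℝ a convex function, and h a strictly convex differentiable function generating the Bregman divergence D_h. Suppose x lies in the interior of dom h and x⁺ ∈ argmin_{u ∈ dom h ∩ C} { f(u) + D_h(u,x) }, with x⁺ in the interior of dom h. Then for every u ∈ dom h ∩ C it holds that f(x⁺) + D_h(x⁺, x) ≤ f(u) + D_h(u,x) - D_h(u,x⁺). -/

import Mathlib

open scoped RealInnerProductSpace

open Filter Topology

theorem three_point_descent (m : ℕ) (C Dom : Set (EuclideanSpace ℝ (Fin m)))
    (hC : IsClosed C) (hCconv : Convex ℝ C)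
    (f : EuclideanSpace ℝ (Fin m) → ℝ) (hf : ConvexOn ℝ C f)
    (h : EuclideanSpace ℝ (Fin m) → ℝ) (hh : StrictConvexOn ℝ Dom h)
    (grad : EuclideanSpace ℝ (Fin m) → EuclideanSpace ℝ (Fin m))
    (hgrad : ∀ y ∈ interior Dom, HasGradientAt h (grad y) y)
    (Dh : EuclideanSpace ℝ (Fin m) → EuclideanSpace ℝ (Fin m) → ℝ)
    (hDh : ∀ p p', Dh p p' = h p - h p' - ⟪grad p', p - p'⟫)
    (x xplus : EuclideanSpace ℝ (Fin m))
    (hx : x ∈ interior Dom) (hxplus : xplus ∈ interior Dom) (hxplusC : xplus ∈ C)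
    (hmin : ∀ u ∈ Dom ∩ C, f xplus + Dh xplus x ≤ f u + Dh u x) :
    ∀ u ∈ Dom ∩ C, f xplus + Dh xplus x ≤ f u + Dh u x - Dh u xplus := by
  intro u hu
  obtain ⟨huD, huC⟩ := hu
  have hxD : xplus ∈ Dom := interior_subset hxplus
  set v := u - xplus with hv
  have hgx : HasGradientAt h (grad xplus) xplus := hgrad _ hxplus
  have h1 : HasDerivAt (fun t : ℝ => xplus + t • v) v 0 := by
    simpa using ((hasDerivAt_id (0:ℝ)).smul_const v).const_add xplus
  have hψ : HasDerivAt (fun t : ℝ => h (xplus + t • v)) ⟪grad xplus, v⟫ 0 := by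
    have hgx' : HasFDerivAt h ((InnerProductSpace.toDual ℝ _) (grad xplus))
        (xplus + (0:ℝ) • v) := by simpa using hgx.hasFDerivAt
    have := hgx'.comp_hasDerivAt 0 h1
    simp at this
    exact this
  have hslope : ∀ t ∈ Set.Ioc (0:ℝ) 1,
      f xplus - f u + ⟪grad x, v⟫ ≤ (h (xplus + t • v) - h xplus) / t := by
    intro t ht
    have h2 : xplus + t • v = (1 - t) • xplus + t • u := by
      simp only [hv, smul_sub, sub_smul, one_smul]
      module
    have hmem : xplus + t • v ∈ Dom ∩ C := by
      rw [h2]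
      exact ⟨hh.1 hxD huD (by linarith [ht.2]) ht.1.le (by ring),
        hCconv hxplusC huC (by linarith [ht.2]) ht.1.le (by ring)⟩
    have hm := hmin _ hmem
    have hconv := hf.2 hxplusC huC (show (0:ℝ) ≤ 1 - t by linarith [ht.2]) ht.1.le
      (by ring)
    rw [← h2] at hconv
    rw [hDh, hDh] at hm
    simp only [smul_eq_mul] at hconv
    rw [le_div_iff₀ ht.1]
    have e1 : ⟪grad x, xplus + t • v - x⟫ = ⟪grad x, xplus - x⟫ + t * ⟪grad x, v⟫ := by
      rw [show xplus + t • v - x = (xplus - x) + t • v by abel]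
      rw [inner_add_right, real_inner_smul_right]
    nlinarith [hm, hconv, e1]
  have hlim : f xplus - f u + ⟪grad x, v⟫ ≤ ⟪grad xplus, v⟫ := by
    have htend : Tendsto (fun t : ℝ => (h (xplus + t • v) - h xplus) / t)
        (𝓝[>] (0:ℝ)) (𝓝 ⟪grad xplus, v⟫) := by
      have hs := hasDerivAt_iff_tendsto_slope.mp hψ
      have hmono : 𝓝[>] (0:ℝ) ≤ 𝓝[≠] (0:ℝ) :=
        nhdsWithin_mono 0 (fun y hy => ne_of_gt hy)
      have := hs.mono_left hmono
      refine this.congr' ?_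
      filter_upwards [self_mem_nhdsWithin] with t ht
      simp [slope_def_field, div_eq_inv_mul]
    refine ge_of_tendsto htend ?_
    filter_upwards [Ioc_mem_nhdsGT_of_mem (by constructor <;> norm_num : (0:ℝ) ∈ Set.Ico 0 1)]
      with t ht using hslope t ht
  rw [hDh, hDh, hDh]
  have e2 : ⟪grad x, u - x⟫ = ⟪grad x, xplus - x⟫ + ⟪grad x, v⟫ := by
    rw [show u - x = (xplus - x) + v by rw [hv]; abel, inner_add_right]
  linarith [hlim, e2]
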